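/- Let T₁, T₂ be linear maps on the space of complex d×d matrices satisfying ‖T₁ − T₂‖_{1−1} ≤ 2, let g : ℝ → ℝ be L-Lipschitz with 0 ≤ g ≤ 1, and let ε ∈ (0,1). Consider the map Φ_y(ρ) := (1−ε)[g(y)T₁(ρ) + (1−g(y))T₂(ρ)] + ε ρ*, where ρ* is a fixed density matrix and T₁, T₂ are trace-norm contractive (‖Tᵢ‖_{1−1} ≤ 1). Suppose y depends on ρ linearly via y(ρ) = Σᵢ Wᵢ Tr(Zᵢ ρ) + W_c with ‖Zᵢ‖ ≤ 1 (operator norm). Then for all density matrices ρ₁, ρ₂, ‖Φ_{y(ρ₁)}(ρ₁) − Φ_{y(ρ₂)}(ρ₂)‖₁ ≤ ((1−ε) + 2L(1−ε)Σᵢ|Wᵢ|) ‖ρ₁ − ρ₂‖₁. -/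

import Mathlib

open scoped ComplexOrder
/-- The trace norm ‖A‖₁ = Tr √(AᴴA), computed as the sum of the square roots of the
eigenvalues of AᴴA. -/
noncomputable def traceNorm {d : ℕ} (A : Matrix (Fin d) (Fin d) ℂ) : ℝ :=
  ∑ i, Real.sqrt ((Matrix.isHermitian_conjTranspose_mul_self A).eigenvalues i)

open scoped Matrix.Norms.L2Operator
open Matrix

variable {d : ℕ}

lemma traceNorm_nonneg (A : Matrix (Fin d) (Fin d) ℂ) : 0 ≤ traceNorm A :=
  Finset.sum_nonneg fun _ _ => Real.sqrt_nonneg _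

-- diagonal entry of unitary conjugation
lemma conj_entry (U M : Matrix (Fin d) (Fin d) ℂ) (j : Fin d) :
    (star U * M * U) j j = dotProduct (star (fun i => U i j)) (M *ᵥ (fun i => U i j)) := by
  simp only [Matrix.mul_apply, Matrix.star_apply, dotProduct, Matrix.mulVec,
    dotProduct, Pi.star_apply, Finset.sum_mul, Finset.mul_sum]
  rw [Finset.sum_comm]
  congr 1; ext l; congr 1; ext k; ring

lemma trace_unitary_conj (M : Matrix (Fin d) (Fin d) ℂ) (U : Matrix.unitaryGroup (Fin d) ℂ) :
    M.trace = ∑ j, dotProduct (star (fun i => (U : Matrix (Fin d) (Fin d) ℂ) i j))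
      (M *ᵥ (fun i => (U : Matrix (Fin d) (Fin d) ℂ) i j)) := by
  have h1 : (star (U : Matrix (Fin d) (Fin d) ℂ) * M * (U : Matrix (Fin d) (Fin d) ℂ)).trace
      = M.trace := by
    rw [Matrix.trace_mul_cycle]
    rw [show (U : Matrix (Fin d) (Fin d) ℂ) * star (U : Matrix (Fin d) (Fin d) ℂ) * M
        = M from by rw [Matrix.mem_unitaryGroup_iff.mp U.2, one_mul]]
  rw [← h1, Matrix.trace]
  exact Finset.sum_congr rfl fun j _ => conj_entry _ M j

noncomputable def evec (x : Fin d → ℂ) : EuclideanSpace ℂ (Fin d) := (WithLp.equiv 2 _).symm x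

lemma dot_abs_le (x y : Fin d → ℂ) :
    ‖dotProduct (star x) y‖ ≤ ‖evec x‖ * ‖evec y‖ := by
  have := norm_inner_le_norm (𝕜 := ℂ) (evec x) (evec y)
  rwa [EuclideanSpace.inner_eq_star_dotProduct, dotProduct_comm] at this

lemma evec_mulVec_norm_le (M : Matrix (Fin d) (Fin d) ℂ) (x : Fin d → ℂ) :
    ‖evec (M *ᵥ x)‖ ≤ ‖M‖ * ‖evec x‖ :=
  M.l2_opNorm_mulVec (evec x)

lemma evec_coe (x : EuclideanSpace ℂ (Fin d)) : evec (⇑x) = x := rfl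

lemma key1 (A B : Matrix (Fin d) (Fin d) ℂ) (hB : ‖B‖ ≤ 1) :
    ‖(B * A).trace‖ ≤ traceNorm A := by
  set hH := Matrix.isHermitian_conjTranspose_mul_self A with hHdef
  set U := hH.eigenvectorUnitary with hU
  have htr := trace_unitary_conj (B * A) U
  have hcol : ∀ j, (fun i => (U : Matrix (Fin d) (Fin d) ℂ) i j) = ⇑(hH.eigenvectorBasis j) := by
    intro j; ext i; exact hH.eigenvectorUnitary_apply i j
  rw [htr]
  refine (norm_sum_le _ _).trans ?_
  refine Finset.sum_le_sum fun j _ => ?_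
  rw [hcol j]
  set v := ⇑(hH.eigenvectorBasis j) with hv
  have hAv : ‖evec (A *ᵥ v)‖ = Real.sqrt (hH.eigenvalues j) := by
    have h1 : ‖evec (A *ᵥ v)‖ = Real.sqrt (RCLike.re (inner (𝕜 := ℂ) (evec (A *ᵥ v)) (evec (A *ᵥ v)))) := by
      rw [← norm_eq_sqrt_re_inner]
    rw [h1]
    congr 1
    rw [EuclideanSpace.inner_eq_star_dotProduct, dotProduct_comm]
    have h2 : dotProduct (star (A *ᵥ v)) (A *ᵥ v)
        = dotProduct (star v) ((Aᴴ * A) *ᵥ v) := by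
      rw [Matrix.star_mulVec, ← dotProduct_mulVec, Matrix.mulVec_mulVec]
    have h3 : (Aᴴ * A) *ᵥ v = (hH.eigenvalues j : ℂ) • v := by
      have := hH.mulVec_eigenvectorBasis j
      rw [← hv] at this
      rw [this]; ext i; simp [Complex.real_smul]
    have h4 : dotProduct (star v) v = 1 := by
      have := hH.eigenvectorBasis.orthonormal.1 j
      have h5 : (inner (𝕜 := ℂ) (hH.eigenvectorBasis j) (hH.eigenvectorBasis j)) = 1 := by
        rw [inner_self_eq_norm_sq_to_K, this]; norm_num
      rw [EuclideanSpace.inner_eq_star_dotProduct, dotProduct_comm] at h5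
      exact h5
    show RCLike.re (dotProduct (star (A *ᵥ v)) (A *ᵥ v)) = hH.eigenvalues j
    rw [h2, h3, dotProduct_smul, h4]
    simp
  calc ‖dotProduct (star v) ((B * A) *ᵥ v)‖
      ≤ ‖evec v‖ * ‖evec ((B * A) *ᵥ v)‖ := dot_abs_le _ _
    _ ≤ ‖evec v‖ * (‖B‖ * ‖evec (A *ᵥ v)‖) := by
        rw [← Matrix.mulVec_mulVec]
        exact mul_le_mul_of_nonneg_left (evec_mulVec_norm_le B _) (norm_nonneg _)
    _ ≤ Real.sqrt (hH.eigenvalues j) := by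
        have hv1 : ‖evec v‖ = 1 := by
          rw [hv, evec_coe]; exact hH.eigenvectorBasis.orthonormal.1 j
        rw [hv1, hAv, one_mul]
        nlinarith [Real.sqrt_nonneg (hH.eigenvalues j), norm_nonneg B]

lemma diagonal_norm_le (g : Fin d → ℂ) (hg : ∀ j, ‖g j‖ ≤ 1) :
    ‖Matrix.diagonal g‖ ≤ 1 := by
  rw [Matrix.cstar_norm_def]
  refine ContinuousLinearMap.opNorm_le_bound _ zero_le_one fun x => ?_
  rw [one_mul]
  have hx : x = evec (WithLp.equiv 2 _ x) := rfl
  rw [hx]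
  have happ : Matrix.toEuclideanCLM (𝕜 := ℂ) (Matrix.diagonal g) (evec (WithLp.equiv 2 _ x))
      = evec (Matrix.diagonal g *ᵥ (WithLp.equiv 2 _ x)) := by
    rfl
  rw [happ]
  set w := WithLp.equiv 2 _ x
  simp only [show ∀ y : Fin d → ℂ, ‖evec y‖ = Real.sqrt (∑ i, ‖y i‖ ^ 2) from
    fun y => EuclideanSpace.norm_eq _]
  refine Real.sqrt_le_sqrt (Finset.sum_le_sum fun i _ => ?_)
  rw [Matrix.mulVec_diagonal]
  have h1 : ‖g i * w i‖ = ‖g i‖ * ‖w i‖ := norm_mul _ _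
  have h2 : ‖g i‖ ≤ 1 := hg i
  have h3 := norm_nonneg (w i)
  have h4 := norm_nonneg (g i)
  rw [h1, mul_pow]
  have h5 : ‖g i‖ ^ 2 ≤ 1 := by nlinarith
  nlinarith [mul_le_mul_of_nonneg_right h5 (sq_nonneg ‖w i‖)]

lemma key2 (A : Matrix (Fin d) (Fin d) ℂ) :
    ∃ C : Matrix (Fin d) (Fin d) ℂ, ‖C‖ ≤ 1 ∧ (C * A).trace = (traceNorm A : ℂ) := by
  set hH := Matrix.isHermitian_conjTranspose_mul_self A with hHdef
  set Uu := hH.eigenvectorUnitary with hUu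
  set U : Matrix (Fin d) (Fin d) ℂ := (Uu : Matrix (Fin d) (Fin d) ℂ) with hU
  set lam := hH.eigenvalues with hlamdef
  have hlam : ∀ j, 0 ≤ lam j :=
    (Matrix.posSemidef_conjTranspose_mul_self A).eigenvalues_nonneg
  set f : Fin d → ℝ := fun j => if lam j = 0 then 0 else (Real.sqrt (lam j))⁻¹ with hf
  have hUU : star U * U = 1 := Matrix.mem_unitaryGroup_iff'.mp Uu.2
  have hUU' : U * star U = 1 := Matrix.mem_unitaryGroup_iff.mp Uu.2
  set P := U * Matrix.diagonal (fun j => (f j : ℂ)) * star U with hP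
  have hspec : Aᴴ * A = U * Matrix.diagonal (RCLike.ofReal ∘ lam) * star U := hH.spectral_theorem
  have hPstar : star P = P := by
    rw [hP, StarMul.star_mul, StarMul.star_mul, star_star]
    rw [show star (Matrix.diagonal fun j => (f j : ℂ)) = Matrix.diagonal fun j => (f j : ℂ) by
      rw [Matrix.star_eq_conjTranspose, Matrix.diagonal_conjTranspose]
      have h6 : (star fun j => ((f j : ℂ))) = fun j => ((f j : ℂ)) := by
        funext j; exact Complex.conj_ofReal _
      rw [h6]]
    rw [mul_assoc]
  have hPH : P * (Aᴴ * A) = U * Matrix.diagonal (fun j => (f j : ℂ) * (lam j : ℂ)) * star U := by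
    rw [hP, hspec]
    calc U * Matrix.diagonal (fun j => (f j : ℂ)) * star U *
          (U * Matrix.diagonal (RCLike.ofReal ∘ lam) * star U)
        = U * (Matrix.diagonal (fun j => (f j : ℂ)) * ((star U * U) *
            Matrix.diagonal (RCLike.ofReal ∘ lam))) * star U := by
          simp only [Matrix.mul_assoc]
      _ = U * Matrix.diagonal (fun j => (f j : ℂ) * (lam j : ℂ)) * star U := by
          rw [hUU, one_mul, Matrix.diagonal_mul_diagonal]
          simp only [Matrix.mul_assoc]
          rfl
  refine ⟨P * Aᴴ, ?_, ?_⟩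
  · -- norm bound
    have hPHP : P * (Aᴴ * A) * P =
        U * Matrix.diagonal (fun j => (f j : ℂ) * (lam j : ℂ) * (f j : ℂ)) * star U := by
      rw [hPH, hP]
      calc (U * Matrix.diagonal (fun j => ((f j : ℂ)) * ((lam j : ℂ)))) * star U *
            ((U * Matrix.diagonal fun j => ((f j : ℂ))) * star U)
          = U * (Matrix.diagonal (fun j => ((f j : ℂ)) * ((lam j : ℂ))) * ((star U * U) *
              Matrix.diagonal fun j => ((f j : ℂ)))) * star U := by
            simp only [Matrix.mul_assoc]
        _ = U * Matrix.diagonal (fun j => (f j : ℂ) * (lam j : ℂ) * (f j : ℂ)) * star U := by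
            rw [hUU, one_mul, Matrix.diagonal_mul_diagonal]
    have hgb : ∀ j, ‖(f j : ℂ) * (lam j : ℂ) * (f j : ℂ)‖ ≤ 1 := by
      intro j
      rw [show ((f j : ℂ)) * ((lam j : ℂ)) * ((f j : ℂ)) = ((f j * lam j * f j : ℝ) : ℂ) from by
        push_cast; ring, Complex.norm_real, Real.norm_eq_abs]
      by_cases h : lam j = 0
      · simp [hf, h]
      · have hs : Real.sqrt (lam j) ≠ 0 := fun h0 => h (by rw [← Real.sq_sqrt (hlam j), h0]; ring)
        rw [hf]
        simp only [h, if_false]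
        rw [show (Real.sqrt (lam j))⁻¹ * lam j * (Real.sqrt (lam j))⁻¹ = 1 from by
          rw [show (lam j : ℝ) = Real.sqrt (lam j) * Real.sqrt (lam j) from
            (Real.mul_self_sqrt (hlam j)).symm]
          field_simp
          rw [Real.sqrt_sq (Real.sqrt_nonneg _)]]
        norm_num
    have hsq : ‖P * Aᴴ‖ * ‖P * Aᴴ‖ = ‖(P * Aᴴ) * star (P * Aᴴ)‖ :=
      CStarRing.norm_self_mul_star.symm
    have hstarAP : (P * Aᴴ) * star (P * Aᴴ) = P * (Aᴴ * A) * P := by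
      rw [StarMul.star_mul, hPstar, Matrix.star_eq_conjTranspose,
        Matrix.conjTranspose_conjTranspose]
      simp only [Matrix.mul_assoc]
    have hDn : ‖U * Matrix.diagonal (fun j => (f j : ℂ) * (lam j : ℂ) * (f j : ℂ)) * star U‖ ≤ 1 := by
      calc ‖U * Matrix.diagonal (fun j => (f j : ℂ) * (lam j : ℂ) * (f j : ℂ)) * star U‖
          = ‖(Uu : Matrix (Fin d) (Fin d) ℂ) *
              (Matrix.diagonal (fun j => (f j : ℂ) * (lam j : ℂ) * (f j : ℂ)) * star U)‖ := by
            rw [← Matrix.mul_assoc]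
        _ = ‖Matrix.diagonal (fun j => (f j : ℂ) * (lam j : ℂ) * (f j : ℂ)) * star U‖ :=
            CStarRing.norm_coe_unitary_mul Uu _
        _ = ‖Matrix.diagonal (fun j => (f j : ℂ) * (lam j : ℂ) * (f j : ℂ)) *
              ((star Uu : Matrix.unitaryGroup (Fin d) ℂ) : Matrix (Fin d) (Fin d) ℂ)‖ := rfl
        _ = ‖Matrix.diagonal (fun j => (f j : ℂ) * (lam j : ℂ) * (f j : ℂ))‖ :=
            CStarRing.norm_mul_coe_unitary _ _
        _ ≤ 1 := diagonal_norm_le _ hgb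
    rw [hstarAP, hPHP] at hsq
    have h9 : ‖P * Aᴴ‖ * ‖P * Aᴴ‖ ≤ 1 := by
      rw [hsq]
      calc ‖(U * Matrix.diagonal fun j => ((f j : ℂ)) * ((lam j : ℂ)) * ((f j : ℂ))) * star U‖
          = ‖U * Matrix.diagonal (fun j => (f j : ℂ) * (lam j : ℂ) * (f j : ℂ)) * star U‖ := rfl
        _ ≤ 1 := hDn
    nlinarith [norm_nonneg (P * Aᴴ)]
  · rw [mul_assoc, hPH, Matrix.trace_mul_cycle, hUU, one_mul,
      Matrix.trace_diagonal]
    rw [show (traceNorm A : ℂ) = ((∑ j, Real.sqrt (lam j) : ℝ) : ℂ) from by rw [traceNorm]]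
    push_cast
    refine Finset.sum_congr rfl fun j _ => ?_
    by_cases h : lam j = 0
    · simp [hf, h]
    · rw [hf]
      simp only [h, if_false]
      have hs : Real.sqrt (lam j) ≠ 0 := fun h0 => h (by rw [← Real.sq_sqrt (hlam j), h0]; ring)
      have hs' : ((Real.sqrt (lam j)) : ℂ) ≠ 0 := Complex.ofReal_ne_zero.mpr hs
      field_simp
      rw [← Complex.ofReal_mul]
      congr 1
      rw [div_mul_eq_mul_div, one_mul, div_eq_iff hs, Real.mul_self_sqrt (hlam j)]

lemma traceNorm_triangle (A B : Matrix (Fin d) (Fin d) ℂ) :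
    traceNorm (A + B) ≤ traceNorm A + traceNorm B := by
  obtain ⟨C, hC, htr⟩ := key2 (A + B)
  have h1 : traceNorm (A + B) = ((C * (A + B)).trace).re := by rw [htr]; simp
  rw [h1, mul_add, Matrix.trace_add, Complex.add_re]
  have hA := (Complex.re_le_norm _).trans (key1 A C hC)
  have hB := (Complex.re_le_norm _).trans (key1 B C hC)
  linarith

lemma traceNorm_smul_le (c : ℂ) (A : Matrix (Fin d) (Fin d) ℂ) :
    traceNorm (c • A) ≤ ‖c‖ * traceNorm A := by
  obtain ⟨C, hC, htr⟩ := key2 (c • A)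
  have h1 : traceNorm (c • A) = ‖(C * (c • A)).trace‖ := by
    rw [htr, Complex.norm_real, Real.norm_eq_abs, abs_of_nonneg (traceNorm_nonneg _)]
  rw [h1, Matrix.mul_smul, Matrix.trace_smul, smul_eq_mul, norm_mul]
  exact mul_le_mul_of_nonneg_left (key1 A C hC) (norm_nonneg c)

lemma traceNorm_real_smul_le (r : ℝ) (A : Matrix (Fin d) (Fin d) ℂ) :
    traceNorm (r • A) ≤ |r| * traceNorm A := by
  have h : r • A = (r : ℂ) • A := by
    ext i j; simp [Complex.real_smul]
  rw [h]
  simpa [Complex.norm_real] using traceNorm_smul_le (r : ℂ) A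

lemma traceNorm_psd_le (ρ : Matrix (Fin d) (Fin d) ℂ) (hρ : ρ.PosSemidef) :
    traceNorm ρ ≤ (ρ.trace).re := by
  obtain ⟨C, hC, htr⟩ := key2 ρ
  have h1 : traceNorm ρ = ((C * ρ).trace).re := by rw [htr]; simp
  set hherm := hρ.1 with hhermdef
  have hlam : ∀ j, 0 ≤ hherm.eigenvalues j := hρ.eigenvalues_nonneg
  set V := hherm.eigenvectorUnitary with hV
  have hcol : ∀ j, (fun i => (V : Matrix (Fin d) (Fin d) ℂ) i j) = ⇑(hherm.eigenvectorBasis j) := by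
    intro j; ext i; exact hherm.eigenvectorUnitary_apply i j
  have htrace_eq : ρ.trace = ((∑ j, hherm.eigenvalues j : ℝ) : ℂ) := by
    conv_lhs => rw [hherm.spectral_theorem]
    rw [Unitary.conjStarAlgAut_apply, Matrix.trace_mul_cycle,
      Matrix.mem_unitaryGroup_iff'.mp hherm.eigenvectorUnitary.2, one_mul,
      Matrix.trace_diagonal]
    push_cast
    rfl
  have h2 : ((C * ρ).trace).re ≤ ∑ j, hherm.eigenvalues j := by
    rw [trace_unitary_conj (C * ρ) V]
    rw [show (∑ j, dotProduct (star fun i => (V : Matrix (Fin d) (Fin d) ℂ) i j)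
        ((C * ρ) *ᵥ fun i => (V : Matrix (Fin d) (Fin d) ℂ) i j)) =
        ∑ j, (hherm.eigenvalues j : ℂ) *
          dotProduct (star ⇑(hherm.eigenvectorBasis j)) (C *ᵥ ⇑(hherm.eigenvectorBasis j))
      from Finset.sum_congr rfl fun j _ => by
        rw [hcol j, ← Matrix.mulVec_mulVec, hherm.mulVec_eigenvectorBasis]
        rw [show (hherm.eigenvalues j • ⇑(hherm.eigenvectorBasis j) : Fin d → ℂ)
            = (hherm.eigenvalues j : ℂ) • ⇑(hherm.eigenvectorBasis j) from by
          ext i; simp [Complex.real_smul]]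
        rw [Matrix.mulVec_smul, dotProduct_smul, smul_eq_mul]]
    rw [Complex.re_sum]
    refine Finset.sum_le_sum fun j _ => ?_
    have hb : ‖dotProduct (star ⇑(hherm.eigenvectorBasis j))
        (C *ᵥ ⇑(hherm.eigenvectorBasis j))‖ ≤ 1 := by
      have h3 := dot_abs_le (⇑(hherm.eigenvectorBasis j)) (C *ᵥ ⇑(hherm.eigenvectorBasis j))
      have h4 := evec_mulVec_norm_le C (⇑(hherm.eigenvectorBasis j))
      have hv1 : ‖evec (⇑(hherm.eigenvectorBasis j))‖ = 1 := by
        rw [evec_coe]; exact hherm.eigenvectorBasis.orthonormal.1 j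
      rw [hv1] at h3 h4
      calc ‖_‖ ≤ 1 * ‖evec (C *ᵥ ⇑(hherm.eigenvectorBasis j))‖ := h3
        _ ≤ ‖C‖ * 1 := by rw [one_mul]; simpa using h4
        _ ≤ 1 := by rw [mul_one]; exact hC
    calc ((hherm.eigenvalues j : ℂ) * _).re
        ≤ ‖(hherm.eigenvalues j : ℂ) * _‖ := Complex.re_le_norm _
      _ = hherm.eigenvalues j * ‖_‖ := by
          rw [norm_mul, Complex.norm_real, Real.norm_eq_abs, abs_of_nonneg (hlam j)]
      _ ≤ hherm.eigenvalues j * 1 := mul_le_mul_of_nonneg_left hb (hlam j)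
      _ = hherm.eigenvalues j := mul_one _
  rw [h1, htrace_eq]
  simpa using h2


/-- the feedback quantum reservoir map Φ_{y(ρ)}(ρ) is Lipschitz in trace norm
with constant (1−ε) + 2L(1−ε)Σᵢ|Wᵢ|. -/
theorem stmt15 {d N : ℕ}
    (T₁ T₂ : Matrix (Fin d) (Fin d) ℂ →ₗ[ℂ] Matrix (Fin d) (Fin d) ℂ)
    (hT1 : ∀ A, traceNorm (T₁ A) ≤ traceNorm A)
    (hT2 : ∀ A, traceNorm (T₂ A) ≤ traceNorm A)
    (hT12 : ∀ A, traceNorm (T₁ A - T₂ A) ≤ 2 * traceNorm A)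
    (g : ℝ → ℝ) (L : ℝ) (hL : 0 ≤ L)
    (hg : ∀ y₁ y₂ : ℝ, |g y₁ - g y₂| ≤ L * |y₁ - y₂|)
    (hg01 : ∀ s, g s ∈ Set.Icc (0:ℝ) 1)
    (ε : ℝ) (hε : ε ∈ Set.Ioo (0:ℝ) 1)
    (ρstar : Matrix (Fin d) (Fin d) ℂ)
    (hρstar : ρstar.PosSemidef ∧ ρstar.trace = 1)
    (W : Fin N → ℝ) (Wc : ℝ) (Z : Fin N → Matrix (Fin d) (Fin d) ℂ)
    (hZ : ∀ i, ‖Matrix.toEuclideanCLM (𝕜 := ℂ) (Z i)‖ ≤ 1)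
    (y : Matrix (Fin d) (Fin d) ℂ → ℝ)
    (hy : ∀ ρ, y ρ = (∑ i, W i * ((Z i * ρ).trace).re) + Wc)
    (Φ : ℝ → Matrix (Fin d) (Fin d) ℂ → Matrix (Fin d) (Fin d) ℂ)
    (hΦ : ∀ s ρ, Φ s ρ = (1 - ε) • (g s • T₁ ρ + (1 - g s) • T₂ ρ) + ε • ρstar)
    (ρ₁ ρ₂ : Matrix (Fin d) (Fin d) ℂ)
    (h₁ : ρ₁.PosSemidef ∧ ρ₁.trace = 1) (h₂ : ρ₂.PosSemidef ∧ ρ₂.trace = 1) :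
    traceNorm (Φ (y ρ₁) ρ₁ - Φ (y ρ₂) ρ₂) ≤
      ((1 - ε) + 2 * L * (1 - ε) * ∑ i, |W i|) * traceNorm (ρ₁ - ρ₂) := by
  have hε0 : (0:ℝ) ≤ 1 - ε := by linarith [hε.2]
  set Δ := ρ₁ - ρ₂ with hΔ
  set g₁ := g (y ρ₁) with hg₁
  set g₂ := g (y ρ₂) with hg₂
  have hg₁0 : 0 ≤ g₁ := (hg01 (y ρ₁)).1
  have hg₁1 : g₁ ≤ 1 := (hg01 (y ρ₁)).2
  set t := traceNorm Δ with ht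
  have ht0 : 0 ≤ t := traceNorm_nonneg Δ
  set S := ∑ i, |W i| with hS
  have hS0 : 0 ≤ S := Finset.sum_nonneg fun _ _ => abs_nonneg _
  set X := g₁ • T₁ Δ + (1 - g₁) • T₂ Δ + (g₁ - g₂) • (T₁ ρ₂ - T₂ ρ₂) with hX
  have hdecomp : Φ (y ρ₁) ρ₁ - Φ (y ρ₂) ρ₂ = (1 - ε) • X := by
    rw [hΦ, hΦ, hX]
    have e1 : T₁ Δ = T₁ ρ₁ - T₁ ρ₂ := by rw [hΔ]; exact map_sub _ _ _
    have e2 : T₂ Δ = T₂ ρ₁ - T₂ ρ₂ := by rw [hΔ]; exact map_sub _ _ _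
    rw [e1, e2]
    module
  -- bound on traceNorm X
  have hXa : traceNorm (g₁ • T₁ Δ) ≤ g₁ * t := by
    calc traceNorm (g₁ • T₁ Δ) ≤ |g₁| * traceNorm (T₁ Δ) := traceNorm_real_smul_le _ _
      _ = g₁ * traceNorm (T₁ Δ) := by rw [abs_of_nonneg hg₁0]
      _ ≤ g₁ * t := mul_le_mul_of_nonneg_left (hT1 Δ) hg₁0
  have hXb : traceNorm ((1 - g₁) • T₂ Δ) ≤ (1 - g₁) * t := by
    calc traceNorm ((1 - g₁) • T₂ Δ) ≤ |1 - g₁| * traceNorm (T₂ Δ) := traceNorm_real_smul_le _ _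
      _ = (1 - g₁) * traceNorm (T₂ Δ) := by rw [abs_of_nonneg (by linarith)]
      _ ≤ (1 - g₁) * t := mul_le_mul_of_nonneg_left (hT2 Δ) (by linarith)
  have hXc : traceNorm ((g₁ - g₂) • (T₁ ρ₂ - T₂ ρ₂)) ≤ |g₁ - g₂| * (2 * traceNorm ρ₂) := by
    calc traceNorm ((g₁ - g₂) • (T₁ ρ₂ - T₂ ρ₂))
        ≤ |g₁ - g₂| * traceNorm (T₁ ρ₂ - T₂ ρ₂) := traceNorm_real_smul_le _ _
      _ ≤ |g₁ - g₂| * (2 * traceNorm ρ₂) :=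
          mul_le_mul_of_nonneg_left (hT12 ρ₂) (abs_nonneg _)
  have hXle : traceNorm X ≤ t + |g₁ - g₂| * (2 * traceNorm ρ₂) := by
    calc traceNorm X ≤ traceNorm (g₁ • T₁ Δ + (1 - g₁) • T₂ Δ) +
          traceNorm ((g₁ - g₂) • (T₁ ρ₂ - T₂ ρ₂)) := traceNorm_triangle _ _
      _ ≤ (traceNorm (g₁ • T₁ Δ) + traceNorm ((1 - g₁) • T₂ Δ)) +
          traceNorm ((g₁ - g₂) • (T₁ ρ₂ - T₂ ρ₂)) := by
            have := traceNorm_triangle (g₁ • T₁ Δ) ((1 - g₁) • T₂ Δ)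
            linarith
      _ ≤ t + |g₁ - g₂| * (2 * traceNorm ρ₂) := by linarith
  -- trace norm of ρ₂ at most 1
  have hρ2 : traceNorm ρ₂ ≤ 1 := by
    have := traceNorm_psd_le ρ₂ h₂.1
    rw [h₂.2] at this
    simpa using this
  -- Lipschitz bound on y
  have hyb : |y ρ₁ - y ρ₂| ≤ S * t := by
    have hterm : ∀ i, |((Z i * Δ).trace).re| ≤ t := by
      intro i
      exact (Complex.abs_re_le_norm _).trans (key1 Δ (Z i) (hZ i))
    have heq : y ρ₁ - y ρ₂ = ∑ i, W i * ((Z i * Δ).trace).re := by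
      rw [hy, hy, hΔ]
      have hsplit : ∀ i, W i * ((Z i * (ρ₁ - ρ₂)).trace).re
          = W i * ((Z i * ρ₁).trace).re - W i * ((Z i * ρ₂).trace).re := by
        intro i
        rw [mul_sub (Z i), Matrix.trace_sub, Complex.sub_re]
        ring
      rw [Finset.sum_congr rfl fun i _ => hsplit i, Finset.sum_sub_distrib]
      ring
    rw [heq]
    calc |∑ i, W i * ((Z i * Δ).trace).re| ≤ ∑ i, |W i * ((Z i * Δ).trace).re| :=
          Finset.abs_sum_le_sum_abs _ _
      _ ≤ ∑ i, |W i| * t := Finset.sum_le_sum fun i _ => by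
          rw [abs_mul]
          exact mul_le_mul_of_nonneg_left (hterm i) (abs_nonneg _)
      _ = S * t := by rw [hS, Finset.sum_mul]
  have hgd : |g₁ - g₂| ≤ L * (S * t) :=
    (hg (y ρ₁) (y ρ₂)).trans (mul_le_mul_of_nonneg_left hyb hL)
  have hprod : |g₁ - g₂| * (2 * traceNorm ρ₂) ≤ (L * (S * t)) * 2 := by
    have h2a : 2 * traceNorm ρ₂ ≤ 2 := by linarith
    have h2b : 0 ≤ 2 * traceNorm ρ₂ := by
      have := traceNorm_nonneg ρ₂; linarith
    exact mul_le_mul hgd h2a h2b (by positivity)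
  calc traceNorm (Φ (y ρ₁) ρ₁ - Φ (y ρ₂) ρ₂) = traceNorm ((1 - ε) • X) := by rw [hdecomp]
    _ ≤ |1 - ε| * traceNorm X := traceNorm_real_smul_le _ _
    _ = (1 - ε) * traceNorm X := by rw [abs_of_nonneg hε0]
    _ ≤ (1 - ε) * (t + (L * (S * t)) * 2) := by
        refine mul_le_mul_of_nonneg_left ?_ hε0
        linarith
    _ = ((1 - ε) + 2 * L * (1 - ε) * S) * t := by ring
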